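/- Let (θ, Φ) be a linear random dynamical system on ℝ^d with dichotomy spectrum Σ, and define the finite-time Lyapunov exponent λ(T, ω, x) := (1/T)·ln( ‖Φ(T, ω)x‖ / ‖x‖ ) for T > 0, ω ∈ Ω and x ∈ ℝ^d \ {0}. If sup Σ < +∞, then lim_{T→∞} esssup_{ω ∈ Ω} sup_{x ∈ ℝ^d \ {0}} λ(T, ω, x) = sup Σ. If inf Σ > −∞, then lim_{T→∞} essinf_{ω ∈ Ω} inf_{x ∈ ℝ^d \ {0}} λ(T, ω, x) = inf Σ. -/

import Mathlib

open MeasureTheory Filter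

noncomputable section

/-- A linear random dynamical system `(θ, Φ)` on `ℝ^d` over the probability space `(Ω, 𝓕, ℙ)`:
`θ` is a measure-preserving measurable dynamical system on `Ω`, and `Φ` is a measurable
cocycle over `θ` taking values in the invertible continuous linear maps of `ℝ^d`. -/
structure LinRDS {Ω : Type*} [MeasurableSpace Ω] (ℙ : Measure Ω) (d : ℕ) where
  θ : ℝ → Ω → Ω
  Φ : ℝ → Ω → EuclideanSpace ℝ (Fin d) →L[ℝ] EuclideanSpace ℝ (Fin d)
  θ_meas : Measurable fun p : ℝ × Ω => θ p.1 p.2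
  θ_zero : ∀ ω, θ 0 ω = ω
  θ_add : ∀ t s ω, θ (t + s) ω = θ t (θ s ω)
  θ_pres : ∀ t, MeasurePreserving (θ t) ℙ ℙ
  Φ_meas : ∀ x, Measurable fun p : ℝ × Ω => Φ p.1 p.2 x
  Φ_zero : ∀ ω, Φ 0 ω = 1
  Φ_cocycle : ∀ t s ω, Φ (t + s) ω = Φ t (θ s ω) * Φ s ω
  Φ_isUnit : ∀ t ω, IsUnit (Φ t ω)

variable {Ω : Type*} [MeasurableSpace Ω] {ℙ : Measure Ω} {d : ℕ}

/-- The base of the linear random dynamical system is ergodic. -/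
def LinRDS.IsErgodic (S : LinRDS ℙ d) : Prop :=
  ∀ A : Set Ω, MeasurableSet A → (∀ t, S.θ t ⁻¹' A = A) → ℙ A = 0 ∨ ℙ A = 1

/-- An invariant projector of a linear random dynamical system. -/
def LinRDS.InvProjector (S : LinRDS ℙ d)
    (P : Ω → EuclideanSpace ℝ (Fin d) →L[ℝ] EuclideanSpace ℝ (Fin d)) : Prop :=
  (∀ x, Measurable fun ω => P ω x) ∧ (∀ ω, P ω * P ω = P ω) ∧
    ∀ t ω, P (S.θ t ω) * S.Φ t ω = S.Φ t ω * P ω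

/-- `(θ, Φ)` admits an exponential dichotomy with growth rate `γ` and invariant projector `P`. -/
def LinRDS.IsED (S : LinRDS ℙ d) (γ : ℝ)
    (P : Ω → EuclideanSpace ℝ (Fin d) →L[ℝ] EuclideanSpace ℝ (Fin d)) : Prop :=
  S.InvProjector P ∧ ∃ a > (0:ℝ), ∃ K ≥ (1:ℝ), ∀ᵐ ω ∂ℙ,
    (∀ t : ℝ, 0 ≤ t → ‖S.Φ t ω * P ω‖ ≤ K * Real.exp ((γ - a) * t)) ∧
    (∀ t : ℝ, t ≤ 0 → ‖S.Φ t ω * (1 - P ω)‖ ≤ K * Real.exp ((γ + a) * t))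

/-- `(θ, Φ)` admits an exponential dichotomy with real growth rate `γ`. -/
def LinRDS.AdmitsED (S : LinRDS ℙ d) (γ : ℝ) : Prop :=
  ∃ P, S.IsED γ P

/-- `(θ, Φ)` admits an exponential dichotomy with extended-real growth rate `γ`; for
`γ = ±∞` this means an exponential dichotomy with some real growth rate whose projector
is a.s. the identity (resp. a.s. zero). -/
def LinRDS.AdmitsEDE (S : LinRDS ℙ d) (γ : EReal) : Prop :=
  (∃ g : ℝ, γ = (g : EReal) ∧ S.AdmitsED g) ∨
  (γ = ⊤ ∧ ∃ g : ℝ, ∃ P, S.IsED g P ∧ ∀ᵐ ω ∂ℙ, P ω = 1) ∨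
  (γ = ⊥ ∧ ∃ g : ℝ, ∃ P, S.IsED g P ∧ ∀ᵐ ω ∂ℙ, P ω = 0)

/-- The dichotomy spectrum of `(θ, Φ)`, a subset of the extended real line. -/
def LinRDS.spectrum (S : LinRDS ℙ d) : Set EReal :=
  {γ | ¬ S.AdmitsEDE γ}

/-- The rank of a continuous linear map on `ℝ^d`. -/
def clmRank (P : EuclideanSpace ℝ (Fin d) →L[ℝ] EuclideanSpace ℝ (Fin d)) : ℕ :=
  Module.finrank ℝ (LinearMap.range
    (P : EuclideanSpace ℝ (Fin d) →ₗ[ℝ] EuclideanSpace ℝ (Fin d)))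

namespace LinRDS

variable (S : LinRDS ℙ d)

lemma inv_left (t : ℝ) (ω : Ω) : S.Φ (-t) (S.θ t ω) * S.Φ t ω = 1 := by
  have h := S.Φ_cocycle (-t) t ω
  rw [neg_add_cancel, S.Φ_zero] at h
  exact h.symm

lemma inv_right (t : ℝ) (ω : Ω) : S.Φ t ω * S.Φ (-t) (S.θ t ω) = 1 := by
  have h := S.Φ_cocycle t (-t) (S.θ t ω)
  rw [add_neg_cancel, S.Φ_zero, ← S.θ_add, neg_add_cancel, S.θ_zero] at h
  exact h.symm

lemma apply_inv_left (t : ℝ) (ω : Ω) (x : EuclideanSpace ℝ (Fin d)) :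
    S.Φ (-t) (S.θ t ω) (S.Φ t ω x) = x := by
  have h := congrArg (fun A => A x) (S.inv_left t ω)
  simpa using h

lemma apply_inv_right (t : ℝ) (ω : Ω) (x : EuclideanSpace ℝ (Fin d)) :
    S.Φ t ω (S.Φ (-t) (S.θ t ω) x) = x := by
  have h := congrArg (fun A => A x) (S.inv_right t ω)
  simpa using h

lemma ae_shift (t : ℝ) {p : Ω → Prop} (h : ∀ᵐ ω ∂ℙ, p ω) : ∀ᵐ ω ∂ℙ, p (S.θ t ω) :=
  (S.θ_pres t).quasiMeasurePreserving.ae h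

lemma phi_ne_zero {x : EuclideanSpace ℝ (Fin d)} (t : ℝ) (ω : Ω) (hx : x ≠ 0) :
    S.Φ t ω x ≠ 0 := by
  intro h
  apply hx
  have h2 := S.apply_inv_left t ω x
  rw [h] at h2
  simpa using h2.symm

lemma lam_le_iff {T b : ℝ} (hT : 0 < T) (ω : Ω) {x : EuclideanSpace ℝ (Fin d)} (hx : x ≠ 0) :
    (1 / T) * Real.log (‖S.Φ T ω x‖ / ‖x‖) ≤ b ↔
      ‖S.Φ T ω x‖ ≤ Real.exp (b * T) * ‖x‖ := by
  have hxn : (0 : ℝ) < ‖x‖ := norm_pos_iff.2 hx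
  have hAx : (0 : ℝ) < ‖S.Φ T ω x‖ := norm_pos_iff.2 (S.phi_ne_zero T ω hx)
  rw [one_div, inv_mul_le_iff₀ hT, mul_comm T b, Real.log_le_iff_le_exp (by positivity),
    div_le_iff₀ hxn]

lemma le_lam_iff {T b : ℝ} (hT : 0 < T) (ω : Ω) {x : EuclideanSpace ℝ (Fin d)} (hx : x ≠ 0) :
    b ≤ (1 / T) * Real.log (‖S.Φ T ω x‖ / ‖x‖) ↔
      Real.exp (b * T) * ‖x‖ ≤ ‖S.Φ T ω x‖ := by
  have hxn : (0 : ℝ) < ‖x‖ := norm_pos_iff.2 hx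
  have hAx : (0 : ℝ) < ‖S.Φ T ω x‖ := norm_pos_iff.2 (S.phi_ne_zero T ω hx)
  rw [one_div, le_inv_mul_iff₀ hT, mul_comm T b, Real.le_log_iff_exp_le (by positivity),
    le_div_iff₀ hxn]

/-- The quantitative content of an exponential dichotomy with explicit constants. -/
def EDw (γ : ℝ) (P : Ω → EuclideanSpace ℝ (Fin d) →L[ℝ] EuclideanSpace ℝ (Fin d))
    (a K : ℝ) : Prop :=
  S.InvProjector P ∧ 0 < a ∧ 1 ≤ K ∧ ∀ᵐ ω ∂ℙ,
    (∀ t : ℝ, 0 ≤ t → ‖S.Φ t ω * P ω‖ ≤ K * Real.exp ((γ - a) * t)) ∧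
    (∀ t : ℝ, t ≤ 0 → ‖S.Φ t ω * (1 - P ω)‖ ≤ K * Real.exp ((γ + a) * t))

lemma isED_iff {γ : ℝ} {P : Ω → EuclideanSpace ℝ (Fin d) →L[ℝ] EuclideanSpace ℝ (Fin d)} :
    S.IsED γ P ↔ ∃ a K, S.EDw γ P a K := by
  constructor
  · rintro ⟨h1, a, ha, K, hK, h2⟩
    exact ⟨a, K, h1, ha, hK, h2⟩
  · rintro ⟨a, K, h1, ha, hK, h2⟩
    exact ⟨h1, a, ha, K, hK, h2⟩

lemma EDw.shift {γ a K : ℝ} {P : Ω → EuclideanSpace ℝ (Fin d) →L[ℝ] EuclideanSpace ℝ (Fin d)}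
    (h : S.EDw γ P a K) {γ' : ℝ} (hγ' : |γ' - γ| < a) :
    S.EDw γ' P (a - |γ' - γ|) K := by
  obtain ⟨hinv, ha, hK, hae⟩ := h
  refine ⟨hinv, by linarith, hK, ?_⟩
  filter_upwards [hae] with ω hω
  obtain ⟨hf, hb⟩ := hω
  constructor
  · intro t ht
    refine (hf t ht).trans (mul_le_mul_of_nonneg_left (Real.exp_le_exp.2 ?_) (by linarith))
    have h1 : γ - a ≤ γ' - (a - |γ' - γ|) := by
      have := neg_abs_le (γ' - γ); linarith
    exact mul_le_mul_of_nonneg_right h1 ht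
  · intro t ht
    refine (hb t ht).trans (mul_le_mul_of_nonneg_left (Real.exp_le_exp.2 ?_) (by linarith))
    have h1 : γ' + (a - |γ' - γ|) ≤ γ + a := by
      have := le_abs_self (γ' - γ); linarith
    exact mul_le_mul_of_nonpos_right h1 ht

end LinRDS
namespace LinRDS

variable (S : LinRDS ℙ d)

lemma eq_zero_of_forall_le_geom {v : EuclideanSpace ℝ (Fin d)} {C c D : ℝ} (hc : 0 < c)
    (h : ∀ n : ℕ, ‖v‖ ≤ C * Real.exp (-c * n) * D) : v = 0 := by
  have h0 : Tendsto (fun n : ℕ => Real.exp (-c * n)) atTop (nhds 0) := by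
    have : ∀ n : ℕ, Real.exp (-c * n) = Real.exp (-c) ^ n := by
      intro n; rw [← Real.exp_nat_mul]; ring_nf
    simp_rw [this]
    exact tendsto_pow_atTop_nhds_zero_of_lt_one (Real.exp_nonneg _)
      (Real.exp_lt_one_iff.2 (by linarith))
  have hlim : Tendsto (fun n : ℕ => C * Real.exp (-c * n) * D) atTop (nhds 0) := by
    have := (h0.const_mul C).mul_const D
    simpa using this
  have : ‖v‖ ≤ 0 := ge_of_tendsto hlim (Eventually.of_forall h)
  exact norm_le_zero_iff.1 this

lemma EDw.unique {γ a K b L : ℝ}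
    {P Q : Ω → EuclideanSpace ℝ (Fin d) →L[ℝ] EuclideanSpace ℝ (Fin d)}
    (hP : S.EDw γ P a K) (hQ : S.EDw γ Q b L) : ∀ᵐ ω ∂ℙ, P ω = Q ω := by
  obtain ⟨⟨_, hPproj, hPinv⟩, ha, hK, hPae⟩ := hP
  obtain ⟨⟨_, hQproj, hQinv⟩, hb, hL, hQae⟩ := hQ
  have hL0 : (0:ℝ) < L := by linarith
  have hK0 : (0:ℝ) < K := by linarith
  have hQapp : ∀ (t : ℝ) (ω' : Ω) x, Q (S.θ t ω') (S.Φ t ω' x) = S.Φ t ω' (Q ω' x) := by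
    intro t ω' x
    have h := congrArg (fun A => A x) (hQinv t ω')
    simpa using h
  have hQnorm : ∀ (ω' : Ω),
      (∀ t : ℝ, 0 ≤ t → ‖S.Φ t ω' * Q ω'‖ ≤ L * Real.exp ((γ - b) * t)) → ‖Q ω'‖ ≤ L := by
    intro ω' h
    have h2 := h 0 le_rfl
    rw [S.Φ_zero, one_mul, mul_zero, Real.exp_zero, mul_one] at h2
    exact h2
  filter_upwards [hPae, MeasureTheory.ae_all_iff.2 fun n : ℕ =>
      ((S.ae_shift (n : ℝ) hQae).and (S.ae_shift (-(n : ℝ)) hQae))] with ω hPω hQn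
  have hPf := hPω.1
  have hPb := hPω.2
  -- Claim A : vectors in the range of `P ω` lie in the range of `Q ω`.
  have claimA : ∀ x, P ω x = x → Q ω x = x := by
    intro x hx
    have hQv : Q ω (x - Q ω x) = 0 := by
      have hsq : Q ω (Q ω x) = Q ω x := by
        have := congrArg (fun A => A x) (hQproj ω); simpa using this
      rw [map_sub, hsq, sub_self]
    have key : ∀ n : ℕ, ‖x - Q ω x‖ ≤ (L * ((1 + L) * K)) * Real.exp (-(a + b) * n) * ‖x‖ := by
      intro n
      set t := (n : ℝ) with htdef
      have ht : (0:ℝ) ≤ t := Nat.cast_nonneg n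
      have h1 : ‖S.Φ t ω x‖ ≤ K * Real.exp ((γ - a) * t) * ‖x‖ := by
        have hxe : S.Φ t ω x = (S.Φ t ω * P ω) x := by
          rw [ContinuousLinearMap.mul_apply, hx]
        rw [hxe]
        exact ((S.Φ t ω * P ω).le_opNorm x).trans
          (mul_le_mul_of_nonneg_right (hPf t ht) (norm_nonneg x))
      have h2 : ‖S.Φ t ω (x - Q ω x)‖ ≤ (1 + L) * ‖S.Φ t ω x‖ := by
        rw [map_sub]
        have e1 : ‖S.Φ t ω (Q ω x)‖ ≤ L * ‖S.Φ t ω x‖ := by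
          rw [← hQapp t ω x]
          exact ((Q (S.θ t ω)).le_opNorm _).trans
            (mul_le_mul_of_nonneg_right (hQnorm _ (hQn n).1.1) (norm_nonneg _))
        calc ‖S.Φ t ω x - S.Φ t ω (Q ω x)‖ ≤ ‖S.Φ t ω x‖ + ‖S.Φ t ω (Q ω x)‖ := norm_sub_le _ _
          _ ≤ ‖S.Φ t ω x‖ + L * ‖S.Φ t ω x‖ := by linarith
          _ = (1 + L) * ‖S.Φ t ω x‖ := by ring
      have h3 : ‖x - Q ω x‖ ≤ L * Real.exp ((γ + b) * (-t)) * ‖S.Φ t ω (x - Q ω x)‖ := by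
        have hrep : x - Q ω x =
            (S.Φ (-t) (S.θ t ω) * (1 - Q (S.θ t ω))) (S.Φ t ω (x - Q ω x)) := by
          rw [ContinuousLinearMap.mul_apply]
          have e1 : (1 - Q (S.θ t ω)) (S.Φ t ω (x - Q ω x)) = S.Φ t ω (x - Q ω x) := by
            rw [ContinuousLinearMap.sub_apply, ContinuousLinearMap.one_apply,
              hQapp t ω (x - Q ω x), hQv, map_zero, sub_zero]
          rw [e1, S.apply_inv_left]
        calc ‖x - Q ω x‖
            = ‖(S.Φ (-t) (S.θ t ω) * (1 - Q (S.θ t ω))) (S.Φ t ω (x - Q ω x))‖ := by rw [← hrep]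
          _ ≤ ‖S.Φ (-t) (S.θ t ω) * (1 - Q (S.θ t ω))‖ * ‖S.Φ t ω (x - Q ω x)‖ :=
              ContinuousLinearMap.le_opNorm _ _
          _ ≤ L * Real.exp ((γ + b) * (-t)) * ‖S.Φ t ω (x - Q ω x)‖ :=
              mul_le_mul_of_nonneg_right ((hQn n).1.2 (-t) (neg_nonpos.2 ht)) (norm_nonneg _)
      have hexp : Real.exp ((γ + b) * (-t)) * Real.exp ((γ - a) * t) = Real.exp (-(a + b) * t) := by
        rw [← Real.exp_add]; ring_nf
      calc ‖x - Q ω x‖ ≤ L * Real.exp ((γ + b) * (-t)) * ‖S.Φ t ω (x - Q ω x)‖ := h3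
        _ ≤ L * Real.exp ((γ + b) * (-t)) * ((1 + L) * ‖S.Φ t ω x‖) :=
            mul_le_mul_of_nonneg_left h2 (by positivity)
        _ ≤ L * Real.exp ((γ + b) * (-t)) * ((1 + L) * (K * Real.exp ((γ - a) * t) * ‖x‖)) := by
            refine mul_le_mul_of_nonneg_left (mul_le_mul_of_nonneg_left h1 (by linarith)) ?_
            positivity
        _ = (L * ((1 + L) * K)) * (Real.exp ((γ + b) * (-t)) * Real.exp ((γ - a) * t)) * ‖x‖ := by
            ring
        _ = (L * ((1 + L) * K)) * Real.exp (-(a + b) * t) * ‖x‖ := by rw [hexp]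
    have hv : x - Q ω x = 0 := eq_zero_of_forall_le_geom (by linarith) key
    have := sub_eq_zero.1 hv
    exact this.symm
  -- Claim B : the kernel of `P ω` is contained in the kernel of `Q ω`.
  have claimB : ∀ x, P ω x = 0 → Q ω x = 0 := by
    intro x hx
    have hQu : Q ω (Q ω x) = Q ω x := by
      have := congrArg (fun A => A x) (hQproj ω); simpa using this
    have key : ∀ n : ℕ, ‖Q ω x‖ ≤ (L * (L * K)) * Real.exp (-(a + b) * n) * ‖x‖ := by
      intro n
      have ht : (-(n:ℝ)) ≤ 0 := neg_nonpos.2 (Nat.cast_nonneg n)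
      have h1 : ‖S.Φ (-(n:ℝ)) ω x‖ ≤ K * Real.exp ((γ + a) * (-(n:ℝ))) * ‖x‖ := by
        have hxe : S.Φ (-(n:ℝ)) ω x = (S.Φ (-(n:ℝ)) ω * (1 - P ω)) x := by
          rw [ContinuousLinearMap.mul_apply, ContinuousLinearMap.sub_apply,
            ContinuousLinearMap.one_apply, hx, sub_zero]
        rw [hxe]
        exact ((S.Φ (-(n:ℝ)) ω * (1 - P ω)).le_opNorm x).trans
          (mul_le_mul_of_nonneg_right (hPb (-(n:ℝ)) ht) (norm_nonneg x))
      have h2 : ‖S.Φ (-(n:ℝ)) ω (Q ω x)‖ ≤ L * ‖S.Φ (-(n:ℝ)) ω x‖ := by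
        rw [← hQapp (-(n:ℝ)) ω x]
        refine ((Q (S.θ (-(n:ℝ)) ω)).le_opNorm _).trans
          (mul_le_mul_of_nonneg_right (hQnorm _ ?_) (norm_nonneg _))
        exact (hQn n).2.1
      have h3 : ‖Q ω x‖ ≤ L * Real.exp ((γ - b) * (n:ℝ)) * ‖S.Φ (-(n:ℝ)) ω (Q ω x)‖ := by
        have hrep : Q ω x =
            (S.Φ (-(-(n:ℝ))) (S.θ (-(n:ℝ)) ω) * Q (S.θ (-(n:ℝ)) ω)) (S.Φ (-(n:ℝ)) ω (Q ω x)) := by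
          rw [ContinuousLinearMap.mul_apply, hQapp (-(n:ℝ)) ω (Q ω x), hQu, S.apply_inv_left]
        calc ‖Q ω x‖
            = ‖(S.Φ (-(-(n:ℝ))) (S.θ (-(n:ℝ)) ω) * Q (S.θ (-(n:ℝ)) ω))
                (S.Φ (-(n:ℝ)) ω (Q ω x))‖ := by rw [← hrep]
          _ ≤ ‖S.Φ (-(-(n:ℝ))) (S.θ (-(n:ℝ)) ω) * Q (S.θ (-(n:ℝ)) ω)‖ *
                ‖S.Φ (-(n:ℝ)) ω (Q ω x)‖ := ContinuousLinearMap.le_opNorm _ _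
          _ ≤ L * Real.exp ((γ - b) * (n:ℝ)) * ‖S.Φ (-(n:ℝ)) ω (Q ω x)‖ := by
              refine mul_le_mul_of_nonneg_right ?_ (norm_nonneg _)
              have h4 := (hQn n).2.1 (-(-(n:ℝ)))
                (by rw [neg_neg]; exact Nat.cast_nonneg n)
              simp only [neg_neg] at h4 ⊢
              exact h4
      have hexp : Real.exp ((γ - b) * (n:ℝ)) * Real.exp ((γ + a) * (-(n:ℝ))) =
          Real.exp (-(a + b) * (n:ℝ)) := by
        rw [← Real.exp_add]; ring_nf
      calc ‖Q ω x‖ ≤ L * Real.exp ((γ - b) * (n:ℝ)) * ‖S.Φ (-(n:ℝ)) ω (Q ω x)‖ := h3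
        _ ≤ L * Real.exp ((γ - b) * (n:ℝ)) * (L * ‖S.Φ (-(n:ℝ)) ω x‖) :=
            mul_le_mul_of_nonneg_left h2 (by positivity)
        _ ≤ L * Real.exp ((γ - b) * (n:ℝ)) * (L * (K * Real.exp ((γ + a) * (-(n:ℝ))) * ‖x‖)) := by
            refine mul_le_mul_of_nonneg_left (mul_le_mul_of_nonneg_left h1 (by linarith)) ?_
            positivity
        _ = (L * (L * K)) * (Real.exp ((γ - b) * (n:ℝ)) * Real.exp ((γ + a) * (-(n:ℝ)))) * ‖x‖ := by
            ring
        _ = (L * (L * K)) * Real.exp (-(a + b) * (n:ℝ)) * ‖x‖ := by rw [hexp]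
    exact eq_zero_of_forall_le_geom (by linarith) key
  -- combine
  ext x
  have hPsq : P ω (P ω x) = P ω x := by
    have := congrArg (fun A => A x) (hPproj ω); simpa using this
  have e1 : Q ω (P ω x) = P ω x := claimA _ hPsq
  have e2 : Q ω (x - P ω x) = 0 := claimB _ (by rw [map_sub, hPsq, sub_self])
  have e3 : Q ω x = Q ω (P ω x) + Q ω (x - P ω x) := by
    rw [← map_add]; congr 1; abel
  rw [e3, e1, e2, add_zero]

end LinRDS
namespace LinRDS

variable (S : LinRDS ℙ d)

/-- ED with projector a.e. the identity. -/
def UpGood (γ : ℝ) : Prop := ∃ P a K, S.EDw γ P a K ∧ ∀ᵐ ω ∂ℙ, P ω = 1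

/-- ED with projector a.e. zero. -/
def DownGood (γ : ℝ) : Prop := ∃ P a K, S.EDw γ P a K ∧ ∀ᵐ ω ∂ℙ, P ω = 0

lemma UpGood.mono {g : ℝ} (h : S.UpGood g) {γ : ℝ} (hγ : g ≤ γ) : S.UpGood γ := by
  obtain ⟨P, a, K, ⟨hinv, ha, hK, hae⟩, hone⟩ := h
  refine ⟨P, a, K, ⟨hinv, ha, hK, ?_⟩, hone⟩
  filter_upwards [hae, hone] with ω hω h1
  refine ⟨fun t ht => (hω.1 t ht).trans (mul_le_mul_of_nonneg_left (Real.exp_le_exp.2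
    (mul_le_mul_of_nonneg_right (by linarith) ht)) (by linarith)), fun t ht => ?_⟩
  rw [h1, sub_self, mul_zero, norm_zero]
  positivity

lemma DownGood.mono {g : ℝ} (h : S.DownGood g) {γ : ℝ} (hγ : γ ≤ g) : S.DownGood γ := by
  obtain ⟨P, a, K, ⟨hinv, ha, hK, hae⟩, hzero⟩ := h
  refine ⟨P, a, K, ⟨hinv, ha, hK, ?_⟩, hzero⟩
  filter_upwards [hae, hzero] with ω hω h0
  constructor
  · intro t ht
    rw [h0, mul_zero, norm_zero]
    positivity
  · intro t ht
    exact (hω.2 t ht).trans (mul_le_mul_of_nonneg_left (Real.exp_le_exp.2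
      (mul_le_mul_of_nonpos_right (by linarith) ht)) (by linarith))

lemma upGood_of_interval {γ G : ℝ} (hγG : γ ≤ G)
    (hres : ∀ μ : ℝ, γ ≤ μ → μ ≤ G → S.AdmitsED μ) (hG : S.UpGood G) : S.UpGood γ := by
  set B := {μ : ℝ | γ ≤ μ ∧ μ ≤ G ∧ S.UpGood μ} with hBdef
  have hGB : G ∈ B := ⟨hγG, le_rfl, hG⟩
  have hBne : B.Nonempty := ⟨G, hGB⟩
  have hBbdd : BddBelow B := ⟨γ, fun μ hμ => hμ.1⟩
  set c := sInf B with hcdef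
  have hcγ : γ ≤ c := le_csInf hBne fun μ hμ => hμ.1
  have hcG : c ≤ G := csInf_le hBbdd hGB
  obtain ⟨P, hP⟩ := hres c hcγ hcG
  obtain ⟨a, K, hedw⟩ := S.isED_iff.1 hP
  have ha := hedw.2.1
  obtain ⟨μ, hμB, hμlt⟩ := exists_lt_of_csInf_lt hBne (by linarith : c < c + a)
  have hcμ : c ≤ μ := csInf_le hBbdd hμB
  have habs : |μ - c| < a := by rw [abs_of_nonneg (by linarith)]; linarith
  have hshift := hedw.shift (S := S) habs
  obtain ⟨Q, b', L', hQ, hQ1⟩ := hμB.2.2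
  have huniq := hshift.unique (S := S) hQ
  have hP1 : ∀ᵐ ω ∂ℙ, P ω = 1 := by
    filter_upwards [huniq, hQ1] with ω h1 h2; rw [h1, h2]
  have hcUp : S.UpGood c := ⟨P, a, K, hedw, hP1⟩
  rcases eq_or_lt_of_le hcγ with hq | hlt
  · rwa [← hq] at hcUp
  · exfalso
    obtain ⟨P', a', K', hedw', hP1'⟩ := hcUp
    have ha' := hedw'.2.1
    set μ' := max γ (c - a' / 2) with hμ'def
    have hμ'lt : μ' < c := max_lt hlt (by linarith)
    have hμ'ge : c - a' / 2 ≤ μ' := le_max_right _ _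
    have habs' : |μ' - c| < a' := by
      rw [abs_of_nonpos (by linarith)]; linarith
    have hμ'B : μ' ∈ B :=
      ⟨le_max_left _ _, by linarith, ⟨P', _, K', hedw'.shift (S := S) habs', hP1'⟩⟩
    exact absurd (csInf_le hBbdd hμ'B) (not_le.2 hμ'lt)

lemma downGood_of_interval {γ G : ℝ} (hGγ : G ≤ γ)
    (hres : ∀ μ : ℝ, G ≤ μ → μ ≤ γ → S.AdmitsED μ) (hG : S.DownGood G) : S.DownGood γ := by
  set B := {μ : ℝ | G ≤ μ ∧ μ ≤ γ ∧ S.DownGood μ} with hBdef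
  have hGB : G ∈ B := ⟨le_rfl, hGγ, hG⟩
  have hBne : B.Nonempty := ⟨G, hGB⟩
  have hBbdd : BddAbove B := ⟨γ, fun μ hμ => hμ.2.1⟩
  set c := sSup B with hcdef
  have hcγ : c ≤ γ := csSup_le hBne fun μ hμ => hμ.2.1
  have hcG : G ≤ c := le_csSup hBbdd hGB
  obtain ⟨P, hP⟩ := hres c hcG hcγ
  obtain ⟨a, K, hedw⟩ := S.isED_iff.1 hP
  have ha := hedw.2.1
  obtain ⟨μ, hμB, hμlt⟩ := exists_lt_of_lt_csSup hBne (by linarith : c - a < c)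
  have hcμ : μ ≤ c := le_csSup hBbdd hμB
  have habs : |μ - c| < a := by rw [abs_of_nonpos (by linarith)]; linarith
  have hshift := hedw.shift (S := S) habs
  obtain ⟨Q, b', L', hQ, hQ0⟩ := hμB.2.2
  have huniq := hshift.unique (S := S) hQ
  have hP0 : ∀ᵐ ω ∂ℙ, P ω = 0 := by
    filter_upwards [huniq, hQ0] with ω h1 h2; rw [h1, h2]
  have hcDown : S.DownGood c := ⟨P, a, K, hedw, hP0⟩
  rcases eq_or_lt_of_le hcγ with hq | hlt
  · rwa [hq] at hcDown
  · exfalso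
    obtain ⟨P', a', K', hedw', hP0'⟩ := hcDown
    have ha' := hedw'.2.1
    set μ' := min γ (c + a' / 2) with hμ'def
    have hμ'lt : c < μ' := lt_min hlt (by linarith)
    have hμ'le : μ' ≤ c + a' / 2 := min_le_right _ _
    have habs' : |μ' - c| < a' := by
      rw [abs_of_nonneg (by linarith)]; linarith
    have hμ'B : μ' ∈ B :=
      ⟨by linarith, min_le_left _ _, ⟨P', _, K', hedw'.shift (S := S) habs', hP0'⟩⟩
    exact absurd (le_csSup hBbdd hμ'B) (not_le.2 hμ'lt)

lemma admitsED_of_not_spectrum {μ : ℝ} (h : (μ : EReal) ∉ S.spectrum) : S.AdmitsED μ := by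
  have h2 : S.AdmitsEDE μ := not_not.1 h
  rcases h2 with ⟨g, hg, hE⟩ | ⟨htop, _⟩ | ⟨hbot, _⟩
  · obtain rfl : μ = g := by exact_mod_cast hg
    exact hE
  · exact absurd htop (EReal.coe_ne_top μ)
  · exact absurd hbot (EReal.coe_ne_bot μ)

lemma not_spectrum_of_admitsED {μ : ℝ} (h : S.AdmitsED μ) : (μ : EReal) ∉ S.spectrum :=
  fun hc => hc (Or.inl ⟨μ, rfl, h⟩)

lemma upGood_of_top (h : S.AdmitsEDE ⊤) : ∃ g, S.UpGood g := by
  rcases h with ⟨g, hg, _⟩ | ⟨_, g, P, hP, h1⟩ | ⟨hb, _⟩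
  · exact absurd hg.symm (EReal.coe_ne_top g)
  · obtain ⟨a, K, hw⟩ := S.isED_iff.1 hP
    exact ⟨g, P, a, K, hw, h1⟩
  · simp at hb

lemma downGood_of_bot (h : S.AdmitsEDE ⊥) : ∃ g, S.DownGood g := by
  rcases h with ⟨g, hg, _⟩ | ⟨ht, _⟩ | ⟨_, g, P, hP, h0⟩
  · exact absurd hg.symm (EReal.coe_ne_bot g)
  · simp at ht
  · obtain ⟨a, K, hw⟩ := S.isED_iff.1 hP
    exact ⟨g, P, a, K, hw, h0⟩

lemma upGood_of_gt_sSup (hfin : sSup S.spectrum < ⊤) {γ : ℝ}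
    (hγ : sSup S.spectrum < (γ : EReal)) : S.UpGood γ := by
  have htop : S.AdmitsEDE ⊤ := by
    by_contra h
    have hmem : (⊤ : EReal) ∈ S.spectrum := h
    exact hfin.ne' (top_le_iff.1 (le_sSup hmem)).symm
  obtain ⟨g, hg⟩ := S.upGood_of_top htop
  refine S.upGood_of_interval (le_max_left γ g) ?_ (hg.mono (S := S) (le_max_right γ g))
  intro μ h1 h2
  refine S.admitsED_of_not_spectrum fun hmem => ?_
  exact absurd ((hγ.trans_le (EReal.coe_le_coe_iff.2 h1)).trans_le (le_sSup hmem)) (lt_irrefl _)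

lemma downGood_of_lt_sInf (hfin : ⊥ < sInf S.spectrum) {γ : ℝ}
    (hγ : (γ : EReal) < sInf S.spectrum) : S.DownGood γ := by
  have hbot : S.AdmitsEDE ⊥ := by
    by_contra h
    have hmem : (⊥ : EReal) ∈ S.spectrum := h
    exact hfin.ne' (le_bot_iff.1 (sInf_le hmem))
  obtain ⟨g, hg⟩ := S.downGood_of_bot hbot
  refine S.downGood_of_interval (min_le_left γ g) ?_ (hg.mono (S := S) (min_le_right γ g))
  intro μ h1 h2
  refine S.admitsED_of_not_spectrum fun hmem => ?_
  exact absurd ((sInf_le hmem).trans_lt ((EReal.coe_le_coe_iff.2 h2).trans_lt hγ)) (lt_irrefl _)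

lemma UpGood.norm_bound {γ : ℝ} (h : S.UpGood γ) :
    ∃ a, 0 < a ∧ ∃ K, 1 ≤ K ∧ ∀ᵐ ω ∂ℙ, ∀ t, 0 ≤ t → ‖S.Φ t ω‖ ≤ K * Real.exp ((γ - a) * t) := by
  obtain ⟨P, a, K, ⟨hinv, ha, hK, hae⟩, h1⟩ := h
  refine ⟨a, ha, K, hK, ?_⟩
  filter_upwards [hae, h1] with ω hω h1ω
  intro t ht
  have h2 := hω.1 t ht
  rwa [h1ω, mul_one] at h2

lemma DownGood.norm_bound {γ : ℝ} (h : S.DownGood γ) :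
    ∃ a, 0 < a ∧ ∃ K, 1 ≤ K ∧ ∀ᵐ ω ∂ℙ, ∀ t, t ≤ 0 → ‖S.Φ t ω‖ ≤ K * Real.exp ((γ + a) * t) := by
  obtain ⟨P, a, K, ⟨hinv, ha, hK, hae⟩, h0⟩ := h
  refine ⟨a, ha, K, hK, ?_⟩
  filter_upwards [hae, h0] with ω hω h0ω
  intro t ht
  have h2 := hω.2 t ht
  rwa [h0ω, sub_zero, mul_one] at h2

lemma lower_of_backward {c K : ℝ} (hK : 0 < K)
    (hnb : ∀ᵐ ω ∂ℙ, ∀ t, t ≤ 0 → ‖S.Φ t ω‖ ≤ K * Real.exp (c * t)) {T : ℝ} (hT : 0 ≤ T) :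
    ∀ᵐ ω ∂ℙ, ∀ x, Real.exp (c * T) * ‖x‖ ≤ K * ‖S.Φ T ω x‖ := by
  filter_upwards [S.ae_shift T hnb] with ω hω
  intro x
  have h1 : ‖x‖ ≤ K * Real.exp (c * (-T)) * ‖S.Φ T ω x‖ := by
    conv_lhs => rw [← S.apply_inv_left T ω x]
    exact ((S.Φ (-T) (S.θ T ω)).le_opNorm _).trans
      (mul_le_mul_of_nonneg_right (hω (-T) (neg_nonpos.2 hT)) (norm_nonneg _))
  have h2 : Real.exp (c * T) * Real.exp (c * (-T)) = 1 := by
    rw [← Real.exp_add, show c * T + c * (-T) = 0 by ring, Real.exp_zero]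
  calc Real.exp (c * T) * ‖x‖ ≤ Real.exp (c * T) * (K * Real.exp (c * (-T)) * ‖S.Φ T ω x‖) :=
        mul_le_mul_of_nonneg_left h1 (Real.exp_pos _).le
    _ = (Real.exp (c * T) * Real.exp (c * (-T))) * (K * ‖S.Φ T ω x‖) := by ring
    _ = K * ‖S.Φ T ω x‖ := by rw [h2, one_mul]

end LinRDS
namespace LinRDS

variable (S : LinRDS ℙ d)

lemma norm_one_le : ‖(1 : EuclideanSpace ℝ (Fin d) →L[ℝ] EuclideanSpace ℝ (Fin d))‖ ≤ 1 := by
  rw [ContinuousLinearMap.one_def]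
  exact ContinuousLinearMap.norm_id_le

lemma forward_iter {T₀ b C : ℝ} (hT₀ : 0 < T₀) (hC : 1 ≤ C)
    (h1 : ∀ᵐ ω ∂ℙ, ∀ x, ‖S.Φ T₀ ω x‖ ≤ Real.exp (b * T₀) * ‖x‖)
    (h2 : ∀ᵐ ω ∂ℙ, ∀ t, 0 ≤ t → t ≤ T₀ → ‖S.Φ t ω‖ ≤ C) :
    ∀ᵐ ω ∂ℙ, ∀ t, 0 ≤ t → ‖S.Φ t ω‖ ≤ (C * Real.exp (|b| * T₀)) * Real.exp (b * t) := by
  filter_upwards [MeasureTheory.ae_all_iff.2 fun n : ℕ =>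
    ((S.ae_shift ((n : ℝ) * T₀) h1).and (S.ae_shift ((n : ℝ) * T₀) h2))] with ω hn
  have hstep : ∀ n : ℕ, ‖S.Φ T₀ (S.θ ((n : ℝ) * T₀) ω)‖ ≤ Real.exp (b * T₀) := fun n =>
    ContinuousLinearMap.opNorm_le_bound _ (Real.exp_nonneg _) (hn n).1
  have hmul : ∀ n : ℕ, ‖S.Φ ((n : ℝ) * T₀) ω‖ ≤ Real.exp (b * T₀) ^ n := by
    intro n
    induction n with
    | zero =>
      simp only [Nat.cast_zero, zero_mul, pow_zero, S.Φ_zero]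
      exact norm_one_le
    | succ k ih =>
      have hco : S.Φ (((k + 1 : ℕ) : ℝ) * T₀) ω =
          S.Φ T₀ (S.θ ((k : ℝ) * T₀) ω) * S.Φ ((k : ℝ) * T₀) ω := by
        have h := S.Φ_cocycle T₀ ((k : ℝ) * T₀) ω
        rw [← h]
        congr 1
        push_cast
        ring
      rw [hco, pow_succ]
      calc ‖S.Φ T₀ (S.θ ((k : ℝ) * T₀) ω) * S.Φ ((k : ℝ) * T₀) ω‖
          ≤ ‖S.Φ T₀ (S.θ ((k : ℝ) * T₀) ω)‖ * ‖S.Φ ((k : ℝ) * T₀) ω‖ := norm_mul_le _ _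
        _ ≤ Real.exp (b * T₀) * Real.exp (b * T₀) ^ k :=
            mul_le_mul (hstep k) ih (norm_nonneg _) (Real.exp_nonneg _)
        _ = Real.exp (b * T₀) ^ k * Real.exp (b * T₀) := by ring
  intro t ht
  set n := ⌊t / T₀⌋₊ with hndef
  have hn1 : (n : ℝ) * T₀ ≤ t := by
    rw [← le_div_iff₀ hT₀]
    exact Nat.floor_le (div_nonneg ht hT₀.le)
  have hn2 : t - (n : ℝ) * T₀ ≤ T₀ := by
    have h3 := Nat.lt_floor_add_one (t / T₀)
    rw [div_lt_iff₀ hT₀] at h3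
    nlinarith
  have hco : S.Φ t ω = S.Φ (t - (n : ℝ) * T₀) (S.θ ((n : ℝ) * T₀) ω) * S.Φ ((n : ℝ) * T₀) ω := by
    have h := S.Φ_cocycle (t - (n : ℝ) * T₀) ((n : ℝ) * T₀) ω
    rwa [sub_add_cancel] at h
  have e1 : Real.exp (b * T₀) ^ n = Real.exp (b * ((n : ℝ) * T₀)) := by
    rw [← Real.exp_nat_mul]; ring_nf
  have e2 : b * ((n : ℝ) * T₀) ≤ |b| * T₀ + b * t := by
    have h6 : b * ((n : ℝ) * T₀ - t) ≤ |b| * T₀ := by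
      calc b * ((n : ℝ) * T₀ - t) ≤ |b * ((n : ℝ) * T₀ - t)| := le_abs_self _
        _ = |b| * |(n : ℝ) * T₀ - t| := abs_mul _ _
        _ ≤ |b| * T₀ :=
            mul_le_mul_of_nonneg_left (abs_le.2 ⟨by linarith, by linarith⟩) (abs_nonneg b)
    linarith
  rw [hco]
  calc ‖S.Φ (t - (n : ℝ) * T₀) (S.θ ((n : ℝ) * T₀) ω) * S.Φ ((n : ℝ) * T₀) ω‖
      ≤ ‖S.Φ (t - (n : ℝ) * T₀) (S.θ ((n : ℝ) * T₀) ω)‖ * ‖S.Φ ((n : ℝ) * T₀) ω‖ :=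
        norm_mul_le _ _
    _ ≤ C * Real.exp (b * T₀) ^ n :=
        mul_le_mul ((hn n).2 _ (by linarith) (by linarith)) (hmul n) (norm_nonneg _)
          (by linarith)
    _ = C * Real.exp (b * ((n : ℝ) * T₀)) := by rw [e1]
    _ ≤ C * Real.exp (|b| * T₀ + b * t) :=
        mul_le_mul_of_nonneg_left (Real.exp_le_exp.2 e2) (by linarith)
    _ = (C * Real.exp (|b| * T₀)) * Real.exp (b * t) := by rw [Real.exp_add]; ring

lemma backward_iter {T₀ b C : ℝ} (hT₀ : 0 < T₀) (hC : 1 ≤ C)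
    (h1 : ∀ᵐ ω ∂ℙ, ∀ x, Real.exp (b * T₀) * ‖x‖ ≤ ‖S.Φ T₀ ω x‖)
    (h2 : ∀ᵐ ω ∂ℙ, ∀ t, -T₀ ≤ t → t ≤ 0 → ‖S.Φ t ω‖ ≤ C) :
    ∀ᵐ ω ∂ℙ, ∀ t, t ≤ 0 → ‖S.Φ t ω‖ ≤ (C * Real.exp (|b| * T₀)) * Real.exp (b * t) := by
  have h1' : ∀ᵐ ω ∂ℙ, ∀ y, ‖S.Φ (-T₀) ω y‖ ≤ Real.exp (-(b * T₀)) * ‖y‖ := by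
    filter_upwards [S.ae_shift (-T₀) h1] with ω hω
    intro y
    have hy := hω (S.Φ (-T₀) ω y)
    have hinv := S.apply_inv_left (-T₀) ω y
    simp only [neg_neg] at hinv
    rw [hinv] at hy
    rw [Real.exp_neg, le_inv_mul_iff₀ (Real.exp_pos (b * T₀))]
    exact hy
  filter_upwards [MeasureTheory.ae_all_iff.2 fun n : ℕ =>
    ((S.ae_shift (-((n : ℝ) * T₀)) h1').and (S.ae_shift (-((n : ℝ) * T₀)) h2))] with ω hn
  have hstep : ∀ n : ℕ, ‖S.Φ (-T₀) (S.θ (-((n : ℝ) * T₀)) ω)‖ ≤ Real.exp (-(b * T₀)) := fun n =>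
    ContinuousLinearMap.opNorm_le_bound _ (Real.exp_nonneg _) (hn n).1
  have hmul : ∀ n : ℕ, ‖S.Φ (-((n : ℝ) * T₀)) ω‖ ≤ Real.exp (-(b * T₀)) ^ n := by
    intro n
    induction n with
    | zero =>
      simp only [Nat.cast_zero, zero_mul, neg_zero, pow_zero, S.Φ_zero]
      exact norm_one_le
    | succ k ih =>
      have hco : S.Φ (-(((k + 1 : ℕ) : ℝ) * T₀)) ω =
          S.Φ (-T₀) (S.θ (-((k : ℝ) * T₀)) ω) * S.Φ (-((k : ℝ) * T₀)) ω := by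
        have h := S.Φ_cocycle (-T₀) (-((k : ℝ) * T₀)) ω
        rw [← h]
        congr 1
        push_cast
        ring
      rw [hco, pow_succ]
      calc ‖S.Φ (-T₀) (S.θ (-((k : ℝ) * T₀)) ω) * S.Φ (-((k : ℝ) * T₀)) ω‖
          ≤ ‖S.Φ (-T₀) (S.θ (-((k : ℝ) * T₀)) ω)‖ * ‖S.Φ (-((k : ℝ) * T₀)) ω‖ := norm_mul_le _ _
        _ ≤ Real.exp (-(b * T₀)) * Real.exp (-(b * T₀)) ^ k :=
            mul_le_mul (hstep k) ih (norm_nonneg _) (Real.exp_nonneg _)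
        _ = Real.exp (-(b * T₀)) ^ k * Real.exp (-(b * T₀)) := by ring
  intro t ht
  set n := ⌊(-t) / T₀⌋₊ with hndef
  have hn1 : (n : ℝ) * T₀ ≤ -t := by
    rw [← le_div_iff₀ hT₀]
    exact Nat.floor_le (div_nonneg (by linarith) hT₀.le)
  have hn2 : -t - (n : ℝ) * T₀ ≤ T₀ := by
    have h3 := Nat.lt_floor_add_one ((-t) / T₀)
    rw [div_lt_iff₀ hT₀] at h3
    nlinarith
  have hco : S.Φ t ω = S.Φ (t + (n : ℝ) * T₀) (S.θ (-((n : ℝ) * T₀)) ω) *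
      S.Φ (-((n : ℝ) * T₀)) ω := by
    have h := S.Φ_cocycle (t + (n : ℝ) * T₀) (-((n : ℝ) * T₀)) ω
    rwa [add_neg_cancel_right] at h
  have e1 : Real.exp (-(b * T₀)) ^ n = Real.exp (-(b * ((n : ℝ) * T₀))) := by
    rw [← Real.exp_nat_mul]; ring_nf
  have e2 : -(b * ((n : ℝ) * T₀)) ≤ |b| * T₀ + b * t := by
    have h6 : -(b * ((n : ℝ) * T₀ + t)) ≤ |b| * T₀ := by
      calc -(b * ((n : ℝ) * T₀ + t)) ≤ |(-(b * ((n : ℝ) * T₀ + t)))| := le_abs_self _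
        _ = |b| * |(n : ℝ) * T₀ + t| := by rw [abs_neg, abs_mul]
        _ ≤ |b| * T₀ :=
            mul_le_mul_of_nonneg_left (abs_le.2 ⟨by linarith, by linarith⟩) (abs_nonneg b)
    linarith
  rw [hco]
  calc ‖S.Φ (t + (n : ℝ) * T₀) (S.θ (-((n : ℝ) * T₀)) ω) * S.Φ (-((n : ℝ) * T₀)) ω‖
      ≤ ‖S.Φ (t + (n : ℝ) * T₀) (S.θ (-((n : ℝ) * T₀)) ω)‖ * ‖S.Φ (-((n : ℝ) * T₀)) ω‖ :=
        norm_mul_le _ _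
    _ ≤ C * Real.exp (-(b * T₀)) ^ n :=
        mul_le_mul ((hn n).2 _ (by linarith) (by linarith)) (hmul n) (norm_nonneg _)
          (by linarith)
    _ = C * Real.exp (-(b * ((n : ℝ) * T₀))) := by rw [e1]
    _ ≤ C * Real.exp (|b| * T₀ + b * t) :=
        mul_le_mul_of_nonneg_left (Real.exp_le_exp.2 e2) (by linarith)
    _ = (C * Real.exp (|b| * T₀)) * Real.exp (b * t) := by rw [Real.exp_add]; ring

end LinRDS
namespace LinRDS

variable (S : LinRDS ℙ d)

/-- The essential-sup integrand. -/
def supLam (T : ℝ) (ω : Ω) : EReal :=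
  ⨆ x : {x : EuclideanSpace ℝ (Fin d) // x ≠ 0},
    (((1 / T) * Real.log (‖S.Φ T ω x.1‖ / ‖x.1‖) : ℝ) : EReal)

/-- The essential-inf integrand. -/
def infLam (T : ℝ) (ω : Ω) : EReal :=
  ⨅ x : {x : EuclideanSpace ℝ (Fin d) // x ≠ 0},
    (((1 / T) * Real.log (‖S.Φ T ω x.1‖ / ‖x.1‖) : ℝ) : EReal)

lemma supLam_le {T b : ℝ} (hT : 0 < T) (ω : Ω) (hb : ‖S.Φ T ω‖ ≤ Real.exp (b * T)) :
    S.supLam T ω ≤ (b : EReal) := by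
  refine iSup_le fun x => EReal.coe_le_coe_iff.2 ((S.lam_le_iff hT ω x.2).2 ?_)
  exact ((S.Φ T ω).le_opNorm x.1).trans (mul_le_mul_of_nonneg_right hb (norm_nonneg _))

lemma norm_le_of_supLam_lt {T b : ℝ} (hT : 0 < T) {ω : Ω} (h : S.supLam T ω < (b : EReal)) :
    ∀ x, ‖S.Φ T ω x‖ ≤ Real.exp (b * T) * ‖x‖ := by
  intro x
  by_cases hx : x = 0
  · simp only [hx, map_zero, norm_zero, mul_zero, le_refl]
  · have h1 : (((1 / T) * Real.log (‖S.Φ T ω x‖ / ‖x‖) : ℝ) : EReal) ≤ S.supLam T ω :=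
      le_iSup (fun y : {x : EuclideanSpace ℝ (Fin d) // x ≠ 0} =>
        (((1 / T) * Real.log (‖S.Φ T ω y.1‖ / ‖y.1‖) : ℝ) : EReal)) ⟨x, hx⟩
    have h2 : (1 / T) * Real.log (‖S.Φ T ω x‖ / ‖x‖) ≤ b :=
      (EReal.coe_le_coe_iff.1 (h1.trans h.le))
    exact (S.lam_le_iff hT ω hx).1 h2

lemma le_infLam {T b : ℝ} (hT : 0 < T) (ω : Ω)
    (hb : ∀ x, Real.exp (b * T) * ‖x‖ ≤ ‖S.Φ T ω x‖) : (b : EReal) ≤ S.infLam T ω :=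
  le_iInf fun x => EReal.coe_le_coe_iff.2 ((S.le_lam_iff hT ω x.2).2 (hb x.1))

lemma norm_ge_of_lt_infLam {T b : ℝ} (hT : 0 < T) {ω : Ω} (h : (b : EReal) < S.infLam T ω) :
    ∀ x, Real.exp (b * T) * ‖x‖ ≤ ‖S.Φ T ω x‖ := by
  intro x
  by_cases hx : x = 0
  · simp only [hx, map_zero, norm_zero, mul_zero, le_refl]
  · have h1 : S.infLam T ω ≤ (((1 / T) * Real.log (‖S.Φ T ω x‖ / ‖x‖) : ℝ) : EReal) :=
      iInf_le (fun y : {x : EuclideanSpace ℝ (Fin d) // x ≠ 0} =>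
        (((1 / T) * Real.log (‖S.Φ T ω y.1‖ / ‖y.1‖) : ℝ) : EReal)) ⟨x, hx⟩
    have h2 : b ≤ (1 / T) * Real.log (‖S.Φ T ω x‖ / ‖x‖) :=
      EReal.coe_le_coe_iff.1 (h.le.trans h1)
    exact (S.le_lam_iff hT ω hx).1 h2

lemma sSup_not_admitsED {s : ℝ} (hs : sSup S.spectrum = (s : EReal)) : ¬ S.AdmitsED s := by
  intro h
  obtain ⟨P, hP⟩ := h
  obtain ⟨a, K, hw⟩ := S.isED_iff.1 hP
  have ha := hw.2.1
  have key : ∀ μ ∈ S.spectrum, μ ≤ ((s - a : ℝ) : EReal) := by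
    intro μ hμ
    have hμs : μ ≤ (s : EReal) := hs ▸ le_sSup hμ
    induction μ using EReal.rec with
    | bot => exact bot_le
    | coe r =>
      have hr : r ≤ s := EReal.coe_le_coe_iff.1 hμs
      refine EReal.coe_le_coe_iff.2 ?_
      by_contra hrs
      rw [not_le] at hrs
      have habs : |r - s| < a := by rw [abs_of_nonpos (by linarith)]; linarith
      exact (S.not_spectrum_of_admitsED
        ⟨P, S.isED_iff.2 ⟨_, _, hw.shift (S := S) habs⟩⟩) hμ
    | top => exact absurd hμs (not_le.2 (EReal.coe_lt_top s))
  have h2 : sSup S.spectrum ≤ ((s - a : ℝ) : EReal) := sSup_le key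
  rw [hs] at h2
  have h3 := EReal.coe_le_coe_iff.1 h2
  linarith

lemma sInf_not_admitsED {i : ℝ} (hi : sInf S.spectrum = (i : EReal)) : ¬ S.AdmitsED i := by
  intro h
  obtain ⟨P, hP⟩ := h
  obtain ⟨a, K, hw⟩ := S.isED_iff.1 hP
  have ha := hw.2.1
  have key : ∀ μ ∈ S.spectrum, ((i + a : ℝ) : EReal) ≤ μ := by
    intro μ hμ
    have hμi : (i : EReal) ≤ μ := hi ▸ sInf_le hμ
    induction μ using EReal.rec with
    | bot => exact absurd hμi (not_le.2 (EReal.bot_lt_coe i))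
    | coe r =>
      have hr : i ≤ r := EReal.coe_le_coe_iff.1 hμi
      refine EReal.coe_le_coe_iff.2 ?_
      by_contra hrs
      rw [not_le] at hrs
      have habs : |r - i| < a := by rw [abs_of_nonneg (by linarith)]; linarith
      exact (S.not_spectrum_of_admitsED
        ⟨P, S.isED_iff.2 ⟨_, _, hw.shift (S := S) habs⟩⟩) hμ
    | top => exact le_top
  have h2 : ((i + a : ℝ) : EReal) ≤ sInf S.spectrum := le_sInf key
  rw [hi] at h2
  have h3 := EReal.coe_le_coe_iff.1 h2
  linarith

end LinRDS
namespace LinRDS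

variable (S : LinRDS ℙ d) [IsProbabilityMeasure ℙ]

lemma eventually_essSup_le (hfin : sSup S.spectrum < ⊤) {c : ℝ}
    (hc : sSup S.spectrum < (c : EReal)) :
    ∀ᶠ T in (atTop : Filter ℝ), essSup (S.supLam T) ℙ ≤ (c : EReal) := by
  obtain ⟨a, ha, K, hK, hae⟩ := (S.upGood_of_gt_sSup hfin hc).norm_bound
  filter_upwards [eventually_ge_atTop (max 1 (Real.log K / a))] with T hT
  have hT1 : (1 : ℝ) ≤ T := le_trans (le_max_left _ _) hT
  have hTpos : (0 : ℝ) < T := by linarith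
  apply essSup_le_of_ae_le
  case hfbdd => isBoundedDefault
  filter_upwards [hae] with ω hω
  apply S.supLam_le hTpos
  have h5 : Real.log K ≤ T * a := (div_le_iff₀ ha).1 (le_trans (le_max_right _ _) hT)
  have h6 : K ≤ Real.exp (a * T) := by
    rw [← Real.exp_log (by linarith : (0 : ℝ) < K)]
    exact Real.exp_le_exp.2 (by linarith)
  calc ‖S.Φ T ω‖ ≤ K * Real.exp ((c - a) * T) := hω T hTpos.le
    _ ≤ Real.exp (a * T) * Real.exp ((c - a) * T) :=
        mul_le_mul_of_nonneg_right h6 (Real.exp_nonneg _)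
    _ = Real.exp (c * T) := by rw [← Real.exp_add]; ring_nf

lemma limsup_essSup_le (hfin : sSup S.spectrum < ⊤) :
    limsup (fun T : ℝ => essSup (S.supLam T) ℙ) atTop ≤ sSup S.spectrum := by
  by_contra hcon
  rw [not_le] at hcon
  obtain ⟨c, hc1, hc2⟩ := EReal.exists_between_coe_real hcon
  have h1 : limsup (fun T : ℝ => essSup (S.supLam T) ℙ) atTop ≤ (c : EReal) :=
    limsup_le_of_le (by isBoundedDefault) (S.eventually_essSup_le hfin hc1)
  exact absurd (hc2.trans_le h1) (lt_irrefl _)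

lemma le_liminf_essSup (hfin : sSup S.spectrum < ⊤) :
    sSup S.spectrum ≤ liminf (fun T : ℝ => essSup (S.supLam T) ℙ) atTop := by
  by_contra hcon
  rw [not_le] at hcon
  obtain ⟨b, hb1, hb2⟩ := EReal.exists_between_coe_real hcon
  -- sSup is real
  obtain ⟨s, hs⟩ : ∃ s : ℝ, sSup S.spectrum = (s : EReal) := by
    have hne1 : sSup S.spectrum ≠ ⊤ := hfin.ne
    have hne2 : sSup S.spectrum ≠ ⊥ := by
      intro hbot
      rw [hbot] at hb2
      exact absurd hb2 (not_lt.2 bot_le)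
    lift sSup S.spectrum to ℝ using ⟨hne1, hne2⟩ with s hs
    exact ⟨s, rfl⟩
  have hbs : b < s := by
    rw [hs] at hb2
    exact_mod_cast hb2
  -- frequently small essSup at some big time T₀
  have hfreq : ∃ᶠ T in (atTop : Filter ℝ), essSup (S.supLam T) ℙ < (b : EReal) :=
    frequently_lt_of_liminf_lt (by isBoundedDefault) hb1
  obtain ⟨T₀, hT₀1, hT₀⟩ := frequently_atTop.1 hfreq 1
  have hT₀pos : (0 : ℝ) < T₀ := by linarith
  have h1 : ∀ᵐ ω ∂ℙ, ∀ x, ‖S.Φ T₀ ω x‖ ≤ Real.exp (b * T₀) * ‖x‖ :=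
    (ae_lt_of_essSup_lt hT₀).mono fun ω hω => S.norm_le_of_supLam_lt hT₀pos hω
  -- uniform bound on a compact window
  have hup := S.upGood_of_gt_sSup hfin (show sSup S.spectrum < ((s + 1 : ℝ) : EReal) by
    rw [hs]; exact_mod_cast lt_add_one s)
  obtain ⟨a₁, ha₁, K₁, hK₁, haeK⟩ := hup.norm_bound
  set C := K₁ * Real.exp (|s + 1 - a₁| * T₀) with hCdef
  have hC1 : (1 : ℝ) ≤ C := by
    have h7 := Real.one_le_exp (show (0 : ℝ) ≤ |s + 1 - a₁| * T₀ by positivity)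
    nlinarith
  have h2 : ∀ᵐ ω ∂ℙ, ∀ t, 0 ≤ t → t ≤ T₀ → ‖S.Φ t ω‖ ≤ C := by
    filter_upwards [haeK] with ω hω
    intro t ht1 ht2
    refine (hω t ht1).trans (mul_le_mul_of_nonneg_left (Real.exp_le_exp.2 ?_) (by linarith))
    calc (s + 1 - a₁) * t ≤ |(s + 1 - a₁) * t| := le_abs_self _
      _ = |s + 1 - a₁| * |t| := abs_mul _ _
      _ ≤ |s + 1 - a₁| * T₀ := by
          refine mul_le_mul_of_nonneg_left ?_ (abs_nonneg _)
          rw [abs_of_nonneg ht1]; exact ht2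
  have h3 := S.forward_iter hT₀pos hC1 h1 h2
  set K' := max 1 (C * Real.exp (|b| * T₀)) with hK'def
  have hedw : S.EDw s (fun _ => 1) (s - b) K' := by
    refine ⟨⟨fun x => measurable_const, fun ω => one_mul 1,
      fun t ω => by rw [one_mul, mul_one]⟩, by linarith, le_max_left 1 _, ?_⟩
    filter_upwards [h3] with ω hω
    constructor
    · intro t ht
      rw [mul_one]
      calc ‖S.Φ t ω‖ ≤ (C * Real.exp (|b| * T₀)) * Real.exp (b * t) := hω t ht
        _ ≤ K' * Real.exp ((s - (s - b)) * t) := by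
            rw [show s - (s - b) = b from by ring]
            exact mul_le_mul_of_nonneg_right (le_max_right _ _) (Real.exp_nonneg _)
    · intro t ht
      rw [sub_self, mul_zero, norm_zero]
      positivity
  exact S.sSup_not_admitsED hs ⟨_, S.isED_iff.2 ⟨_, _, hedw⟩⟩

lemma eventually_le_essInf (hfin : ⊥ < sInf S.spectrum) {γ : ℝ}
    (hγ : (γ : EReal) < sInf S.spectrum) :
    ∀ᶠ T in (atTop : Filter ℝ), (γ : EReal) ≤ essInf (S.infLam T) ℙ := by
  obtain ⟨a, ha, K, hK, hae⟩ := (S.downGood_of_lt_sInf hfin hγ).norm_bound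
  have hK0 : (0 : ℝ) < K := by linarith
  filter_upwards [eventually_ge_atTop (max 1 (Real.log K / a))] with T hT
  have hT1 : (1 : ℝ) ≤ T := le_trans (le_max_left _ _) hT
  have hTpos : (0 : ℝ) < T := by linarith
  apply le_essInf_of_ae_le
  case hfbdd => isBoundedDefault
  filter_upwards [S.lower_of_backward hK0 hae hTpos.le] with ω hω
  apply S.le_infLam hTpos
  intro x
  have h5 : Real.log K ≤ T * a := (div_le_iff₀ ha).1 (le_trans (le_max_right _ _) hT)
  have h6 : K ≤ Real.exp (a * T) := by
    rw [← Real.exp_log hK0]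
    exact Real.exp_le_exp.2 (by linarith)
  have h7 : K * (Real.exp (γ * T) * ‖x‖) ≤ Real.exp ((γ + a) * T) * ‖x‖ := by
    calc K * (Real.exp (γ * T) * ‖x‖) = (K * Real.exp (γ * T)) * ‖x‖ := by ring
      _ ≤ (Real.exp (a * T) * Real.exp (γ * T)) * ‖x‖ :=
          mul_le_mul_of_nonneg_right
            (mul_le_mul_of_nonneg_right h6 (Real.exp_nonneg _)) (norm_nonneg _)
      _ = Real.exp ((γ + a) * T) * ‖x‖ := by rw [← Real.exp_add]; ring_nf
  have h9 : K * (Real.exp (γ * T) * ‖x‖) ≤ K * ‖S.Φ T ω x‖ := h7.trans (hω x)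
  exact le_of_mul_le_mul_left h9 hK0

lemma le_liminf_essInf (hfin : ⊥ < sInf S.spectrum) :
    sInf S.spectrum ≤ liminf (fun T : ℝ => essInf (S.infLam T) ℙ) atTop := by
  by_contra hcon
  rw [not_le] at hcon
  obtain ⟨γ, h1, h2⟩ := EReal.exists_between_coe_real hcon
  have h3 : (γ : EReal) ≤ liminf (fun T : ℝ => essInf (S.infLam T) ℙ) atTop :=
    le_liminf_of_le (by isBoundedDefault) (S.eventually_le_essInf hfin h2)
  exact absurd (h1.trans_le h3) (lt_irrefl _)

lemma limsup_essInf_le (hfin : ⊥ < sInf S.spectrum) :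
    limsup (fun T : ℝ => essInf (S.infLam T) ℙ) atTop ≤ sInf S.spectrum := by
  rcases eq_or_ne (sInf S.spectrum) ⊤ with htop | hne
  · rw [htop]; exact le_top
  obtain ⟨i, hi⟩ : ∃ i : ℝ, sInf S.spectrum = (i : EReal) := by
    lift sInf S.spectrum to ℝ using ⟨hne, hfin.ne'⟩ with i hi
    exact ⟨i, rfl⟩
  by_contra hcon
  rw [not_le] at hcon
  obtain ⟨b, hb1, hb2⟩ := EReal.exists_between_coe_real hcon
  have hib : i < b := by
    rw [hi] at hb1
    exact_mod_cast hb1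
  have hfreq : ∃ᶠ T in (atTop : Filter ℝ), (b : EReal) < essInf (S.infLam T) ℙ :=
    frequently_lt_of_lt_limsup (by isBoundedDefault) hb2
  obtain ⟨T₀, hT₀1, hT₀⟩ := frequently_atTop.1 hfreq 1
  have hT₀pos : (0 : ℝ) < T₀ := by linarith
  have h1 : ∀ᵐ ω ∂ℙ, ∀ x, Real.exp (b * T₀) * ‖x‖ ≤ ‖S.Φ T₀ ω x‖ :=
    (ae_lt_of_lt_essInf hT₀).mono fun ω hω => S.norm_ge_of_lt_infLam hT₀pos hω
  have hdown := S.downGood_of_lt_sInf hfin (show ((i - 1 : ℝ) : EReal) < sInf S.spectrum by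
    rw [hi]; exact_mod_cast sub_one_lt i)
  obtain ⟨a₀, ha₀, K₀, hK₀, haeK⟩ := hdown.norm_bound
  set C := K₀ * Real.exp (|i - 1 + a₀| * T₀) with hCdef
  have hC1 : (1 : ℝ) ≤ C := by
    have h7 := Real.one_le_exp (show (0 : ℝ) ≤ |i - 1 + a₀| * T₀ by positivity)
    nlinarith
  have h2 : ∀ᵐ ω ∂ℙ, ∀ t, -T₀ ≤ t → t ≤ 0 → ‖S.Φ t ω‖ ≤ C := by
    filter_upwards [haeK] with ω hω
    intro t ht1 ht2
    refine (hω t ht2).trans (mul_le_mul_of_nonneg_left (Real.exp_le_exp.2 ?_) (by linarith))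
    calc (i - 1 + a₀) * t ≤ |(i - 1 + a₀) * t| := le_abs_self _
      _ = |i - 1 + a₀| * |t| := abs_mul _ _
      _ ≤ |i - 1 + a₀| * T₀ := by
          refine mul_le_mul_of_nonneg_left ?_ (abs_nonneg _)
          rw [abs_of_nonpos ht2]; linarith
  have h3 := S.backward_iter hT₀pos hC1 h1 h2
  set K' := max 1 (C * Real.exp (|b| * T₀)) with hK'def
  have hedw : S.EDw i (fun _ => 0) (b - i) K' := by
    refine ⟨⟨fun x => by simpa using measurable_const, fun ω => by rw [mul_zero],
      fun t ω => by rw [mul_zero, zero_mul]⟩, by linarith, le_max_left 1 _, ?_⟩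
    filter_upwards [h3] with ω hω
    constructor
    · intro t ht
      rw [mul_zero, norm_zero]
      positivity
    · intro t ht
      rw [sub_zero, mul_one]
      calc ‖S.Φ t ω‖ ≤ (C * Real.exp (|b| * T₀)) * Real.exp (b * t) := hω t ht
        _ ≤ K' * Real.exp ((i + (b - i)) * t) := by
            rw [show i + (b - i) = b from by ring]
            exact mul_le_mul_of_nonneg_right (le_max_right _ _) (Real.exp_nonneg _)
  exact S.sInf_not_admitsED hi ⟨_, S.isED_iff.2 ⟨_, _, hedw⟩⟩

end LinRDS
/-- The finite-time Lyapunov exponents converge to the extremes of the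
dichotomy spectrum: if `sup Σ < +∞` then
`lim_{T→∞} esssup_ω sup_{x ≠ 0} (1/T) ln (‖Φ(T,ω)x‖/‖x‖) = sup Σ`, and if `inf Σ > −∞`
then `lim_{T→∞} essinf_ω inf_{x ≠ 0} (1/T) ln (‖Φ(T,ω)x‖/‖x‖) = inf Σ`. -/
theorem finite_time_lyapunov_tendsto_spectrum_bounds
    {Ω : Type*} [MeasurableSpace Ω] {ℙ : Measure Ω} [IsProbabilityMeasure ℙ] {d : ℕ}
    (hd : 0 < d) (S : LinRDS ℙ d) :
    (sSup S.spectrum < ⊤ →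
      Tendsto (fun T : ℝ =>
          essSup (fun ω =>
            ⨆ x : {x : EuclideanSpace ℝ (Fin d) // x ≠ 0},
              (((1 / T) * Real.log (‖S.Φ T ω x.1‖ / ‖x.1‖) : ℝ) : EReal)) ℙ)
        atTop (nhds (sSup S.spectrum))) ∧
    (⊥ < sInf S.spectrum →
      Tendsto (fun T : ℝ =>
          essInf (fun ω =>
            ⨅ x : {x : EuclideanSpace ℝ (Fin d) // x ≠ 0},
              (((1 / T) * Real.log (‖S.Φ T ω x.1‖ / ‖x.1‖) : ℝ) : EReal)) ℙ)
        atTop (nhds (sInf S.spectrum))) := by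
  constructor
  · intro hfin
    have h1 := S.limsup_essSup_le hfin
    have h2 := S.le_liminf_essSup hfin
    have hle : liminf (fun T : ℝ => essSup (S.supLam T) ℙ) atTop ≤
        limsup (fun T : ℝ => essSup (S.supLam T) ℙ) atTop := liminf_le_limsup
    exact tendsto_of_liminf_eq_limsup (le_antisymm (hle.trans h1) h2)
      (le_antisymm h1 (h2.trans hle))
  · intro hfin
    have h1 := S.limsup_essInf_le hfin
    have h2 := S.le_liminf_essInf hfin
    have hle : liminf (fun T : ℝ => essInf (S.infLam T) ℙ) atTop ≤
        limsup (fun T : ℝ => essInf (S.infLam T) ℙ) atTop := liminf_le_limsup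
    exact tendsto_of_liminf_eq_limsup (le_antisymm (hle.trans h1) h2)
      (le_antisymm h1 (h2.trans hle))

end
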